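/- Let H be a real m×m matrix, let c ∈ ℝ^m, let τ ∈ ℝ, and let H̃ be the (m+1)×(m+1) block matrix [[H, c], [0, 0]]. Then e^{τH̃} = [[e^{τH}, τ φ_1(τH) c], [0, 1]]; that is, the top-left m×m block of e^{τH̃} is e^{τH}, the top-right column is τ φ_1(τH) c, the bottom-left row is zero, and the bottom-right entry is 1. -/

import Mathlib

open Matrix MeasureTheory
open scoped Nat

/-! ### Auxiliary summability lemmas, proved using the `L∞`-operator norm. -/

section Summability

attribute [local instance] Matrix.linftyOpNormedRing Matrix.linftyOpNormedAlgebra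

lemma aux_hasSum_expSeries {I : Type*} [Fintype I] [DecidableEq I]
    (M : Matrix I I ℝ) :
    HasSum (fun n : ℕ => ((n ! : ℝ))⁻¹ • M ^ n) (NormedSpace.exp M) :=
  NormedSpace.exp_series_hasSum_exp' (𝕂 := ℝ) M

lemma aux_summable_expSeries {I : Type*} [Fintype I] [DecidableEq I]
    (M : Matrix I I ℝ) :
    Summable (fun n : ℕ => ((n ! : ℝ))⁻¹ • M ^ n) :=
  NormedSpace.expSeries_summable' (𝕂 := ℝ) M

lemma aux_summable_phiSeries {I : Type*} [Fintype I] [DecidableEq I]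
    (M : Matrix I I ℝ) :
    Summable (fun n : ℕ => (((n + 1)! : ℝ))⁻¹ • M ^ n) := by
  refine Summable.of_norm_bounded (NormedSpace.norm_expSeries_summable' (𝕂 := ℝ) M) fun n => ?_
  rw [norm_smul, norm_smul]
  have h1 : (((n + 1)! : ℝ))⁻¹ ≤ ((n ! : ℝ))⁻¹ := by
    apply inv_anti₀
    · exact_mod_cast Nat.factorial_pos n
    · exact_mod_cast Nat.factorial_le (Nat.le_succ n)
  have h2 : (0:ℝ) ≤ ((n + 1)! : ℝ)⁻¹ := by positivity
  have h3 : (0:ℝ) ≤ ((n)! : ℝ)⁻¹ := by positivity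
  rw [Real.norm_eq_abs, Real.norm_eq_abs, abs_of_nonneg h2, abs_of_nonneg h3]
  exact mul_le_mul_of_nonneg_right h1 (norm_nonneg _)

end Summability

attribute [local instance] Matrix.normedAddCommGroup Matrix.normedSpace

/-- The matrix `φ`-functions: `φ₀(M) = e^M` and
`φ_k(M) = ∫_0^1 e^{(1-θ)M} θ^{k-1}/(k-1)! dθ` for `k ≥ 1`. -/
noncomputable def phi {n : ℕ} (k : ℕ) (M : Matrix (Fin n) (Fin n) ℝ) :
    Matrix (Fin n) (Fin n) ℝ :=
  if k = 0 then NormedSpace.exp M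
  else ∫ θ in (0:ℝ)..1, ((θ ^ (k - 1) / (k - 1)! : ℝ)) • NormedSpace.exp ((1 - θ) • M)

/-! ### Entrywise sup-norm estimates -/

section NormBounds

variable {k : ℕ}

lemma aux_norm_mul_le (A B : Matrix (Fin k) (Fin k) ℝ) :
    ‖A * B‖ ≤ (k : ℝ) * ‖A‖ * ‖B‖ := by
  rw [Matrix.norm_le_iff (by positivity)]
  intro i j
  rw [Matrix.mul_apply]
  calc ‖∑ l, A i l * B l j‖ ≤ ∑ l, ‖A i l * B l j‖ := norm_sum_le _ _
    _ ≤ ∑ _l : Fin k, ‖A‖ * ‖B‖ := by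
        refine Finset.sum_le_sum fun l _ => ?_
        rw [norm_mul]
        exact mul_le_mul (Matrix.norm_entry_le_entrywise_sup_norm A)
          (Matrix.norm_entry_le_entrywise_sup_norm B) (norm_nonneg _) (norm_nonneg _)
    _ = (k : ℝ) * ‖A‖ * ‖B‖ := by
        simp [Finset.sum_const, mul_assoc]

lemma aux_norm_one_le : ‖(1 : Matrix (Fin k) (Fin k) ℝ)‖ ≤ 1 := by
  rw [Matrix.norm_le_iff zero_le_one]
  intro i j
  rw [Matrix.one_apply]
  split_ifs <;> simp

lemma aux_norm_pow_le (M : Matrix (Fin k) (Fin k) ℝ) (n : ℕ) :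
    ‖M ^ n‖ ≤ (max 1 ((k : ℝ) * ‖M‖)) ^ n := by
  induction n with
  | zero => simpa using aux_norm_one_le
  | succ n ih =>
      have hc : (0:ℝ) ≤ max 1 ((k : ℝ) * ‖M‖) := le_trans zero_le_one (le_max_left _ _)
      calc ‖M ^ (n + 1)‖ = ‖M ^ n * M‖ := by rw [pow_succ]
        _ ≤ (k : ℝ) * ‖M ^ n‖ * ‖M‖ := aux_norm_mul_le _ _
        _ = ((k : ℝ) * ‖M‖) * ‖M ^ n‖ := by ring
        _ ≤ (max 1 ((k : ℝ) * ‖M‖)) * (max 1 ((k : ℝ) * ‖M‖)) ^ n := by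
            refine mul_le_mul (le_max_right _ _) ih (norm_nonneg _) hc
        _ = (max 1 ((k : ℝ) * ‖M‖)) ^ (n + 1) := by rw [← pow_succ']

end NormBounds

/-! ### `φ₁` as a power series -/

instance aux_matrixContinuousENorm {k : ℕ} : ContinuousENorm (Matrix (Fin k) (Fin k) ℝ) :=
  SeminormedAddGroup.toContinuousENorm

lemma phi_one_eq {k : ℕ} (M : Matrix (Fin k) (Fin k) ℝ) :
    phi 1 M = ∑' n : ℕ, (((n + 1)! : ℝ))⁻¹ • M ^ n := by
  classical
  set c : ℝ := max 1 ((k : ℝ) * ‖M‖) with hc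
  have hc0 : (0:ℝ) ≤ c := le_trans zero_le_one (le_max_left _ _)
  rw [phi, if_neg one_ne_zero]
  have hsimp : ∀ θ : ℝ, ((θ ^ (1 - 1) / (1 - 1)! : ℝ)) • NormedSpace.exp ((1 - θ) • M)
      = NormedSpace.exp ((1 - θ) • M) := by
    intro θ
    norm_num
  rw [intervalIntegral.integral_congr (fun θ _ => hsimp θ),
    intervalIntegral.integral_of_le zero_le_one]
  have hexp : ∀ θ : ℝ, NormedSpace.exp ((1 - θ) • M)
      = ∑' n : ℕ, ((1 - θ) ^ n * ((n ! : ℝ))⁻¹) • M ^ n := by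
    intro θ
    rw [NormedSpace.exp_eq_tsum (𝕂 := ℝ)]
    exact tsum_congr fun n => by rw [smul_pow, smul_smul, mul_comm]
  simp only [hexp]
  have hcont : ∀ n : ℕ, Continuous fun θ : ℝ => ((1 - θ) ^ n * ((n ! : ℝ))⁻¹) • M ^ n := by
    intro n
    exact (((continuous_const.sub continuous_id).pow n).mul continuous_const).smul
      continuous_const
  have hInt : ∀ n : ℕ, Integrable (fun θ : ℝ => ((1 - θ) ^ n * ((n ! : ℝ))⁻¹) • M ^ n)
      (volume.restrict (Set.Ioc (0:ℝ) 1)) := fun n => (hcont n).integrableOn_Ioc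
  have hbound : ∀ n : ℕ, ∀ θ ∈ Set.Ioc (0:ℝ) 1,
      ‖((1 - θ) ^ n * ((n ! : ℝ))⁻¹) • M ^ n‖ ≤ c ^ n / n ! := by
    intro n θ hθ
    obtain ⟨h0, h1⟩ := hθ
    have habs : |1 - θ| ≤ 1 := by rw [abs_le]; constructor <;> linarith
    have := aux_norm_pow_le M n
    calc ‖((1 - θ) ^ n * ((n ! : ℝ))⁻¹) • M ^ n‖
        = |1 - θ| ^ n * ((n ! : ℝ))⁻¹ * ‖M ^ n‖ := by
          rw [norm_smul, Real.norm_eq_abs, abs_mul, abs_pow,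
            abs_of_nonneg (inv_nonneg.2 (by positivity : (0:ℝ) ≤ (n ! : ℝ)))]
      _ ≤ 1 ^ n * ((n ! : ℝ))⁻¹ * c ^ n := by
          have h1n : |1 - θ| ^ n ≤ 1 ^ n := pow_le_pow_left₀ (abs_nonneg _) habs n
          have hMn : ‖M ^ n‖ ≤ c ^ n := this
          have hf0 : (0:ℝ) ≤ ((n ! : ℝ))⁻¹ := by positivity
          calc |1 - θ| ^ n * ((n ! : ℝ))⁻¹ * ‖M ^ n‖
              ≤ 1 ^ n * ((n ! : ℝ))⁻¹ * ‖M ^ n‖ := by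
                exact mul_le_mul_of_nonneg_right
                  (mul_le_mul_of_nonneg_right h1n hf0) (norm_nonneg _)
            _ ≤ 1 ^ n * ((n ! : ℝ))⁻¹ * c ^ n := by
                exact mul_le_mul_of_nonneg_left hMn (by positivity)
      _ = c ^ n / n ! := by rw [one_pow, one_mul, div_eq_mul_inv, mul_comm]
  have hSum : Summable fun n : ℕ =>
      ∫ θ in Set.Ioc (0:ℝ) 1, ‖((1 - θ) ^ n * ((n ! : ℝ))⁻¹) • M ^ n‖ := by
    refine Summable.of_nonneg_of_le
      (fun n => integral_nonneg fun θ => norm_nonneg _) (fun n => ?_)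
      (Real.summable_pow_div_factorial c)
    calc (∫ θ in Set.Ioc (0:ℝ) 1, ‖((1 - θ) ^ n * ((n ! : ℝ))⁻¹) • M ^ n‖)
        ≤ ∫ _θ in Set.Ioc (0:ℝ) 1, (c ^ n / n !) := by
          refine setIntegral_mono_on ((hInt n).norm) ((integrableOn_const_iff).2 ?_)
            measurableSet_Ioc (hbound n)
          right
          simp [Real.volume_Ioc]
      _ = c ^ n / n ! := by
          simp [Real.volume_Ioc]
  refine (MeasureTheory.integral_tsum_of_summable_integral_norm hInt hSum).symm.trans ?_
  refine tsum_congr fun n => ?_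
  rw [integral_smul_const]
  congr 1
  rw [← intervalIntegral.integral_of_le zero_le_one, intervalIntegral.integral_mul_const]
  have hpowint : (∫ θ in (0:ℝ)..1, (1 - θ) ^ n) = (1 : ℝ) / (n + 1) := by
    have h := intervalIntegral.integral_comp_sub_left (a := (0:ℝ)) (b := 1)
      (fun x => x ^ n) 1
    simp only [sub_self, sub_zero] at h
    rw [h, integral_pow]
    norm_num
  rw [hpowint, Nat.factorial_succ]
  have hn : ((n ! : ℝ)) ≠ 0 := by positivity
  push_cast
  rw [mul_inv]
  field_simp

/-! ### Block structure of the exponential -/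

section Blocks

variable {m : ℕ}

private def bb (A : Matrix (Fin m) (Fin m) ℝ) (C : Matrix (Fin m) (Fin 1) ℝ) :
    ℕ → Matrix (Fin m) (Fin 1) ℝ
  | 0 => 0
  | (k + 1) => A ^ k * C

private def dd : ℕ → Matrix (Fin 1) (Fin 1) ℝ
  | 0 => 1
  | (_ + 1) => 0

private lemma pow_fromBlocks (A : Matrix (Fin m) (Fin m) ℝ) (C : Matrix (Fin m) (Fin 1) ℝ)
    (n : ℕ) :
    (Matrix.fromBlocks A C 0 0) ^ n = Matrix.fromBlocks (A ^ n) (bb A C n) 0 (dd n) := by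
  induction n with
  | zero => simp [bb, dd, Matrix.fromBlocks_one]
  | succ n ih =>
      rw [pow_succ, ih, Matrix.fromBlocks_multiply]
      simp [bb, dd, pow_succ]

private def fromBlocksHom (m : ℕ) :
    (Matrix (Fin m) (Fin m) ℝ × Matrix (Fin m) (Fin 1) ℝ × Matrix (Fin 1) (Fin 1) ℝ) →+
      Matrix (Fin m ⊕ Fin 1) (Fin m ⊕ Fin 1) ℝ where
  toFun p := Matrix.fromBlocks p.1 p.2.1 0 p.2.2
  map_zero' := by
    ext (i | i) (j | j) <;> simp
  map_add' p q := by
    ext (i | i) (j | j) <;> simp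

private lemma continuous_fromBlocksHom :
    Continuous (fromBlocksHom m) := by
  apply continuous_pi; intro i; apply continuous_pi; intro j
  cases i with
  | inl i =>
      cases j with
      | inl j =>
          exact (continuous_apply j).comp ((continuous_apply i).comp continuous_fst)
      | inr j =>
          exact (continuous_apply j).comp
            ((continuous_apply i).comp (continuous_fst.comp continuous_snd))
  | inr i =>
      cases j with
      | inl j => exact continuous_const
      | inr j =>
          exact (continuous_apply j).comp
            ((continuous_apply i).comp (continuous_snd.comp continuous_snd))

private lemma hasSum_fromBlocks {a : ℕ → Matrix (Fin m) (Fin m) ℝ}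
    {b : ℕ → Matrix (Fin m) (Fin 1) ℝ} {d : ℕ → Matrix (Fin 1) (Fin 1) ℝ}
    {A : Matrix (Fin m) (Fin m) ℝ} {B : Matrix (Fin m) (Fin 1) ℝ}
    {D : Matrix (Fin 1) (Fin 1) ℝ}
    (ha : HasSum a A) (hb : HasSum b B) (hd : HasSum d D) :
    HasSum (fun n => Matrix.fromBlocks (a n) (b n) (0 : Matrix (Fin 1) (Fin m) ℝ) (d n))
      (Matrix.fromBlocks A B 0 D) :=
  (ha.prodMk (hb.prodMk hd)).map (fromBlocksHom m) continuous_fromBlocksHom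

private def mulCHom (C : Matrix (Fin m) (Fin 1) ℝ) :
    Matrix (Fin m) (Fin m) ℝ →+ Matrix (Fin m) (Fin 1) ℝ :=
  AddMonoidHom.mk' (fun X => X * C) fun X Y => Matrix.add_mul X Y C

private lemma continuous_mulCHom (C : Matrix (Fin m) (Fin 1) ℝ) :
    Continuous (mulCHom C) := by
  apply continuous_pi; intro i; apply continuous_pi; intro j
  show Continuous fun X : Matrix (Fin m) (Fin m) ℝ => (X * C) i j
  simp only [Matrix.mul_apply]
  exact continuous_finset_sum _ fun l _ =>
    (continuous_id.matrix_elem i l).mul continuous_const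

lemma exp_fromBlocks (A : Matrix (Fin m) (Fin m) ℝ) (C : Matrix (Fin m) (Fin 1) ℝ) :
    NormedSpace.exp (Matrix.fromBlocks A C (0 : Matrix (Fin 1) (Fin m) ℝ)
        (0 : Matrix (Fin 1) (Fin 1) ℝ))
      = Matrix.fromBlocks (NormedSpace.exp A)
          ((∑' n : ℕ, (((n + 1)! : ℝ))⁻¹ • A ^ n) * C) (0 : Matrix (Fin 1) (Fin m) ℝ)
          (1 : Matrix (Fin 1) (Fin 1) ℝ) := by
  classical
  have ha : HasSum (fun n : ℕ => ((n ! : ℝ))⁻¹ • A ^ n) (NormedSpace.exp A) :=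
    aux_hasSum_expSeries A
  set P : Matrix (Fin m) (Fin m) ℝ := ∑' n : ℕ, (((n + 1)! : ℝ))⁻¹ • A ^ n with hP
  have hq : HasSum (fun n : ℕ => (((n + 1)! : ℝ))⁻¹ • A ^ n) P :=
    (aux_summable_phiSeries A).hasSum
  have hqC : HasSum (fun n : ℕ => ((((n + 1)! : ℝ))⁻¹ • A ^ n) * C) (P * C) :=
    hq.map (mulCHom C) (continuous_mulCHom C)
  have hb : HasSum (fun n : ℕ => ((n ! : ℝ))⁻¹ • bb A C n) (P * C) := by
    have h1 : HasSum (fun n : ℕ => ((((n:ℕ) + 1)! : ℝ))⁻¹ • bb A C (n + 1)) (P * C) := by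
      simpa only [Matrix.smul_mul, bb] using hqC
    have h2 : HasSum (fun n : ℕ => ((n ! : ℝ))⁻¹ • bb A C n)
        (P * C + ∑ i ∈ Finset.range 1, ((i ! : ℝ))⁻¹ • bb A C i) := by
      refine (hasSum_nat_add_iff 1).mp ?_
      convert h1 using 2 with n
    simpa [bb] using h2
  have hd : HasSum (fun n : ℕ => ((n ! : ℝ))⁻¹ • dd n) (1 : Matrix (Fin 1) (Fin 1) ℝ) := by
    have : (fun n : ℕ => ((n ! : ℝ))⁻¹ • dd n)
        = fun n : ℕ => if n = 0 then (1 : Matrix (Fin 1) (Fin 1) ℝ) else 0 := by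
      funext n
      cases n with
      | zero => simp [dd]
      | succ n => simp [dd]
    rw [this]
    exact hasSum_ite_eq 0 1
  have hsum : HasSum (fun n : ℕ => ((n ! : ℝ))⁻¹ •
        (Matrix.fromBlocks A C (0 : Matrix (Fin 1) (Fin m) ℝ)
          (0 : Matrix (Fin 1) (Fin 1) ℝ)) ^ n)
      (Matrix.fromBlocks (NormedSpace.exp A) (P * C) (0 : Matrix (Fin 1) (Fin m) ℝ)
        (1 : Matrix (Fin 1) (Fin 1) ℝ)) := by
    have h := hasSum_fromBlocks ha hb hd
    have hfun : (fun n : ℕ => ((n ! : ℝ))⁻¹ •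
          (Matrix.fromBlocks A C (0 : Matrix (Fin 1) (Fin m) ℝ)
            (0 : Matrix (Fin 1) (Fin 1) ℝ)) ^ n)
        = fun n : ℕ => Matrix.fromBlocks (((n ! : ℝ))⁻¹ • A ^ n) (((n ! : ℝ))⁻¹ • bb A C n)
            (0 : Matrix (Fin 1) (Fin m) ℝ) (((n ! : ℝ))⁻¹ • dd n) := by
      funext n
      rw [pow_fromBlocks, Matrix.fromBlocks_smul, smul_zero]
    rw [hfun]
    exact h
  rw [NormedSpace.exp_eq_tsum (𝕂 := ℝ)]
  exact hsum.tsum_eq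

end Blocks

theorem stmt8 {m : ℕ} (H : Matrix (Fin m) (Fin m) ℝ) (c : Fin m → ℝ) (τ : ℝ) :
    NormedSpace.exp
        (τ • Matrix.fromBlocks H (Matrix.of fun i (_ : Fin 1) => c i) 0 0)
      = Matrix.fromBlocks (NormedSpace.exp (τ • H))
          (Matrix.of fun i (_ : Fin 1) => (τ • (phi 1 (τ • H)).mulVec c) i)
          (0 : Matrix (Fin 1) (Fin m) ℝ) (1 : Matrix (Fin 1) (Fin 1) ℝ) := by
  have hsmul : τ • Matrix.fromBlocks H (Matrix.of fun i (_ : Fin 1) => c i) 0 0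
      = Matrix.fromBlocks (τ • H) (τ • Matrix.of fun i (_ : Fin 1) => c i)
          (0 : Matrix (Fin 1) (Fin m) ℝ) (0 : Matrix (Fin 1) (Fin 1) ℝ) := by
    rw [Matrix.fromBlocks_smul, smul_zero, smul_zero]
  rw [hsmul, exp_fromBlocks]
  have hblock : (∑' n : ℕ, (((n + 1)! : ℝ))⁻¹ • (τ • H) ^ n)
        * (τ • Matrix.of fun i (_ : Fin 1) => c i)
      = Matrix.of fun i (_ : Fin 1) => (τ • (phi 1 (τ • H)).mulVec c) i := by
    rw [← phi_one_eq]
    ext i j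
    simp only [Matrix.mul_apply, Matrix.smul_apply, Matrix.of_apply, Pi.smul_apply,
      Matrix.mulVec, dotProduct, smul_eq_mul, Finset.mul_sum]
    exact Finset.sum_congr rfl fun l _ => by ring
  rw [hblock]
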